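/- Suppose η_1 = η_2 (a = 0). If y(0) = max{|x_1(0) - (λ_1 - μ_1)/λ_1|, x_2(0)} ≤ (λ_1 - μ_1)/(32(λ_1 + λ_2)), then for all t ≥ 0 the second component satisfies (1/2) x_2(0) e^{-t(λ_1 - μ_1)} ≤ x_2(t) ≤ 2 x_2(0) e^{-t(λ_1 - μ_1)}. -/

import Mathlib

open Set Filter Topology

lemma barrier_local {φ : ℝ → ℝ} {p τ : ℝ} (hφ : HasDerivAt φ p τ)
    (h0 : φ τ ≤ 0) (hd : φ τ = 0 → p < 0) :
    ∃ δ > 0, ∀ s ∈ Set.Icc τ (τ + δ), φ s ≤ 0 := by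
  rcases h0.lt_or_eq with h | h
  · have hev : ∀ᶠ s in 𝓝 τ, φ s < 0 :=
      (hφ.continuousAt.tendsto).eventually_lt_const h
    rw [Metric.eventually_nhds_iff] at hev
    obtain ⟨ε, hε, hb⟩ := hev
    refine ⟨ε/2, by linarith, fun s hs => ?_⟩
    have : dist s τ < ε := by
      rw [Real.dist_eq, abs_sub_lt_iff]
      constructor <;> [linarith [hs.1, hs.2]; linarith [hs.1, hs.2]]
    exact (hb this).le
  · have hp : p < 0 := hd h
    have hs := hasDerivAt_iff_tendsto_slope.mp hφ
    have hev : ∀ᶠ s in 𝓝[>] τ, slope φ τ s < 0 :=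
      ((hs.mono_left (nhdsWithin_mono _ (fun x hx => ne_of_gt hx)))).eventually_lt_const hp
    rw [eventually_iff, mem_nhdsGT_iff_exists_Ioc_subset] at hev
    obtain ⟨b, hb, hsub⟩ := hev
    refine ⟨b - τ, by simpa using hb, fun s hs' => ?_⟩
    rcases eq_or_lt_of_le hs'.1 with rfl | hlt
    · exact h0
    · have hmem : s ∈ Set.Ioc τ b := ⟨hlt, by linarith [hs'.2]⟩
      have hsl : slope φ τ s < 0 := hsub hmem
      rw [slope_def_field] at hsl
      have hden : 0 < s - τ := by linarith
      rcases div_neg_iff.mp hsl with ⟨h1, h2⟩ | ⟨h1, h2⟩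
      · linarith
      · linarith

lemma closed_le {φ : ℝ → ℝ} (hφ : Continuous φ) {τ : ℝ} (hτ : 0 < τ)
    (h : ∀ s, 0 ≤ s → s < τ → φ s ≤ 0) : φ τ ≤ 0 := by
  have ht : Filter.Tendsto φ (𝓝[<] τ) (𝓝 (φ τ)) :=
    (hφ.tendsto τ).mono_left nhdsWithin_le_nhds
  refine le_of_tendsto ht ?_
  filter_upwards [Ioo_mem_nhdsLT_of_mem (Set.right_mem_Ioc.mpr hτ)] with s hs
  exact h s hs.1.le hs.2

lemma invariant_of_local {P : ℝ → Prop} (hP0 : P 0)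
    (hclosed : ∀ τ, 0 < τ → (∀ s, 0 ≤ s → s < τ → P s) → P τ)
    (hstep : ∀ τ, 0 ≤ τ → P τ → ∃ δ > 0, ∀ s ∈ Set.Icc τ (τ + δ), P s) :
    ∀ t, 0 ≤ t → P t := by
  intro t ht
  by_contra hPt
  set S : Set ℝ := {s | s ∈ Set.Icc 0 t ∧ ¬ P s} with hS
  have hne : S.Nonempty := ⟨t, ⟨ht, le_rfl⟩, hPt⟩
  have hbdd : BddBelow S := ⟨0, fun s hs => hs.1.1⟩
  set τ := sInf S with hτ
  have hτ0 : 0 ≤ τ := le_csInf hne fun s hs => hs.1.1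
  have hτt : τ ≤ t := csInf_le hbdd ⟨⟨ht, le_rfl⟩, hPt⟩
  have hbelow : ∀ s, 0 ≤ s → s < τ → P s := by
    intro s hs0 hsτ
    by_contra hns
    exact absurd (csInf_le hbdd ⟨⟨hs0, hsτ.le.trans hτt⟩, hns⟩) (not_le.mpr hsτ)
  have hPτ : P τ := by
    rcases eq_or_lt_of_le hτ0 with h | h
    · exact h ▸ hP0
    · exact hclosed τ h hbelow
  obtain ⟨δ, hδ, hall⟩ := hstep τ hτ0 hPτ
  have hlb : ∀ s ∈ S, τ + δ ≤ s := by
    intro s hs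
    by_contra hc
    push_neg at hc
    exact hs.2 (hall s ⟨csInf_le hbdd hs, hc.le⟩)
  have := le_csInf hne hlb
  linarith

lemma ode_exp_identity (g : ℝ → ℝ) (hg : Continuous g) (x2 : ℝ → ℝ)
    (hx2 : ∀ s, HasDerivAt x2 (g s * x2 s) s) :
    ∀ s : ℝ, x2 s = x2 0 * Real.exp (∫ r in (0:ℝ)..s, g r) := by
  have hG : ∀ s : ℝ, HasDerivAt (fun w => ∫ r in (0:ℝ)..w, g r) (g s) s := by
    intro s
    exact intervalIntegral.integral_hasDerivAt_right (hg.intervalIntegrable _ _)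
      (hg.stronglyMeasurableAtFilter _ _) hg.continuousAt
  have hder : ∀ s : ℝ, HasDerivAt (fun w => x2 w * Real.exp (-(∫ r in (0:ℝ)..w, g r))) 0 s := by
    intro s
    have h2 : HasDerivAt (fun w => Real.exp (-(∫ r in (0:ℝ)..w, g r)))
        (Real.exp (-(∫ r in (0:ℝ)..s, g r)) * (-(g s))) s := ((hG s).neg).exp
    have h3 := (hx2 s).mul h2
    refine h3.congr_deriv ?_
    ring
  have hconst : ∀ s : ℝ, x2 s * Real.exp (-(∫ r in (0:ℝ)..s, g r)) = x2 0 := by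
    intro s
    have := is_const_of_deriv_eq_zero (f := fun w => x2 w * Real.exp (-(∫ r in (0:ℝ)..w, g r)))
      (fun w => (hder w).differentiableAt) (fun w => (hder w).deriv) s 0
    simpa using this
  intro s
  have h := hconst s
  field_simp [Real.exp_neg] at h
  rw [← h, mul_assoc, ← Real.exp_add]; simp

set_option maxHeartbeats 2000000 in
theorem sis_repeated_eigenvalue_second_component_bounds
    (lam1 lam2 mu1 mu2 : ℝ)
    (hlam2 : 0 < lam2) (hmu2 : 0 < mu2) (hmu1 : 0 < mu1) (hlt : mu1 < lam1)
    (heq : lam1 - mu1 = mu2 - lam2 * mu1 / lam1)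
    (x1 x2 : ℝ → ℝ) (hx2nn : ∀ t : ℝ, 0 ≤ x2 t)
    (hode1 : ∀ t : ℝ, HasDerivAt x1 (lam1 * x1 t * (1 - x1 t - x2 t) - mu1 * x1 t) t)
    (hode2 : ∀ t : ℝ, HasDerivAt x2 (lam2 * x2 t * (1 - x1 t - x2 t) - mu2 * x2 t) t)
    (hy0 : max |x1 0 - (lam1 - mu1) / lam1| (x2 0) ≤ (lam1 - mu1) / (32 * (lam1 + lam2))) :
    ∀ t : ℝ, 0 ≤ t →
      (1 / 2) * x2 0 * Real.exp (-t * (lam1 - mu1)) ≤ x2 t ∧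
      x2 t ≤ 2 * x2 0 * Real.exp (-t * (lam1 - mu1)) := by
  intro t ht
  have hl1 : 0 < lam1 := hmu1.trans hlt
  have hl1' : lam1 ≠ 0 := ne_of_gt hl1
  set e : ℝ := lam1 - mu1 with he_def
  have he0 : 0 < e := sub_pos.mpr hlt
  set A : ℝ := e / lam1 with hA_def
  set u : ℝ → ℝ := fun s => x1 s - A with hu_def
  -- derivative of u
  have hu' : ∀ s, HasDerivAt u (-(lam1 * u s + e) * (u s + x2 s)) s := by
    intro s
    have key : -(lam1 * u s + e) * (u s + x2 s)
        = lam1 * x1 s * (1 - x1 s - x2 s) - mu1 * x1 s := by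
      simp only [hu_def, hA_def, he_def]
      field_simp
      ring
    exact key ▸ ((hode1 s).sub_const A)
  -- derivative of x2 in the convenient form
  have hx2' : ∀ s, HasDerivAt x2 ((-e - lam2 * (u s + x2 s)) * x2 s) s := by
    intro s
    have heq2 : (lam1 - mu1) * lam1 = mu2 * lam1 - lam2 * mu1 := by
      rw [he_def] at heq
      field_simp at heq; linarith
    have key : (-e - lam2 * (u s + x2 s)) * x2 s
        = lam2 * x2 s * (1 - x1 s - x2 s) - mu2 * x2 s := by
      simp only [hu_def, hA_def, he_def]
      field_simp
      linear_combination (-(x2 s)) * heq2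
    exact key ▸ (hode2 s)
  have hdu : Differentiable ℝ u := fun s => (hu' s).differentiableAt
  have hdx2 : Differentiable ℝ x2 := fun s => (hx2' s).differentiableAt
  have hcu : Continuous u := hdu.continuous
  have hcx2 : Continuous x2 := hdx2.continuous
  have hg_cont : Continuous (fun s => -e - lam2 * (u s + x2 s)) := by
    exact continuous_const.sub (continuous_const.mul (hcu.add hcx2))
  -- integrating factor identity
  have hident : ∀ s : ℝ, x2 s
      = x2 0 * Real.exp (∫ r in (0:ℝ)..s, (-e - lam2 * (u r + x2 r))) :=
    ode_exp_identity _ hg_cont x2 hx2'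
  -- trivial case
  by_cases h20 : x2 0 = 0
  · have : x2 t = 0 := by rw [hident t, h20]; ring
    rw [this, h20]
    constructor <;> nlinarith [Real.exp_pos (-t * e)]
  -- main case
  have hx20 : 0 < x2 0 := lt_of_le_of_ne (hx2nn 0) (Ne.symm h20)
  set y0 : ℝ := max |x1 0 - A| (x2 0) with hy0_def
  have hy0pos : 0 < y0 := lt_of_lt_of_le hx20 (le_max_right _ _)
  have hΛ : 0 < lam1 + lam2 := by linarith
  have h32 : 32 * (lam1 + lam2) * y0 ≤ e := by
    have := (le_div_iff₀ (by positivity : (0:ℝ) < 32 * (lam1 + lam2))).mp hy0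
    linarith
  have hl1y0 : lam1 * y0 ≤ e / 32 := by nlinarith
  have hl2y0 : lam2 * y0 ≤ e / 32 := by nlinarith
  set E : ℝ → ℝ := fun s => Real.exp (-(e/2) * s) with hE_def
  have hE' : ∀ s, HasDerivAt E (-(e/2) * E s) s := by
    intro s
    have h1 : HasDerivAt (fun w : ℝ => -(e/2) * w) (-(e/2)) s := by
      simpa using (hasDerivAt_id s).const_mul (-(e/2))
    have := h1.exp
    simpa [hE_def, mul_comm] using this
  have hEpos : ∀ s, 0 < E s := fun s => Real.exp_pos _
  have hEle1 : ∀ s, 0 ≤ s → E s ≤ 1 := by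
    intro s hs
    rw [hE_def]
    simp only []
    calc Real.exp (-(e/2) * s) ≤ Real.exp 0 := Real.exp_le_exp.mpr (by nlinarith)
    _ = 1 := Real.exp_zero
  have hcE : Continuous E := Real.continuous_exp.comp (continuous_const.mul continuous_id)
  set c : ℝ → ℝ := fun s => 4 * y0 * E s with hc_def
  set d : ℝ → ℝ := fun s => y0 * E s with hd_def
  have hc' : ∀ s, HasDerivAt c (-(e/2) * c s) s := by
    intro s
    have := (hE' s).const_mul (4 * y0)
    refine this.congr_deriv ?_
    simp only [hc_def]; ring
  have hd' : ∀ s, HasDerivAt d (-(e/2) * d s) s := by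
    intro s
    have := (hE' s).const_mul y0
    refine this.congr_deriv ?_
    simp only [hd_def]; ring
  -- the invariant region
  have hinv : ∀ s, 0 ≤ s →
      (u s - c s ≤ 0 ∧ -u s - c s ≤ 0 ∧ x2 s - d s ≤ 0) := by
    apply invariant_of_local
    · -- initial condition
      have hu0 : |x1 0 - A| ≤ y0 := hy0_def ▸ le_max_left _ _
      have hx20' : x2 0 ≤ y0 := hy0_def ▸ le_max_right _ _
      have hE0 : E 0 = 1 := by simp [hE_def]
      have habs := abs_le.mp hu0
      refine ⟨?_, ?_, ?_⟩ <;> simp only [hu_def, hc_def, hd_def, hE0] <;>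
        [nlinarith [habs.2]; nlinarith [habs.1]; nlinarith]
    · -- closedness
      intro τ hτ hall
      have hcc : Continuous c := continuous_const.mul hcE
      have hdd : Continuous d := continuous_const.mul hcE
      exact ⟨closed_le (φ := fun s => u s - c s) (hcu.sub hcc) hτ
          (fun s h1 h2 => (hall s h1 h2).1),
        closed_le (φ := fun s => -u s - c s) ((hcu.neg).sub hcc) hτ
          (fun s h1 h2 => (hall s h1 h2).2.1),
        closed_le (φ := fun s => x2 s - d s) (hcx2.sub hdd) hτ
          (fun s h1 h2 => (hall s h1 h2).2.2)⟩
    · -- local step via barrier derivatives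
      intro τ hτ0 hPτ
      obtain ⟨h1, h2, h3⟩ := hPτ
      have hcpos : 0 < c τ := by simp only [hc_def]; positivity
      have hdpos : 0 < d τ := by simp only [hd_def]; positivity
      have hx2τ : 0 ≤ x2 τ := hx2nn τ
      have hEτ1 : E τ ≤ 1 := hEle1 τ hτ0
      have hEτ : 0 < E τ := hEpos τ
      have hcd : c τ = 4 * d τ := by simp only [hc_def, hd_def]; ring
      have hl1c : lam1 * c τ ≤ e / 8 := by
        have h' : lam1 * c τ = 4 * (lam1 * y0) * E τ := by simp only [hc_def]; ring
        nlinarith [mul_le_mul_of_nonneg_right hl1y0 hEτ.le]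
      have hl2c : lam2 * c τ ≤ e / 8 := by
        have h' : lam2 * c τ = 4 * (lam2 * y0) * E τ := by simp only [hc_def]; ring
        nlinarith [mul_le_mul_of_nonneg_right hl2y0 hEτ.le]
      obtain ⟨δ1, hδ1, hb1⟩ := barrier_local ((hu' τ).sub (hc' τ)) h1 (by
        intro h0
        have huτ : u τ = c τ := by simp only [Pi.sub_apply] at h0; linarith
        rw [huτ]
        nlinarith [mul_nonneg (mul_nonneg hl1.le hcpos.le) (add_nonneg hcpos.le hx2τ),
          mul_pos he0 hcpos, mul_nonneg he0.le hx2τ])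
      obtain ⟨δ2, hδ2, hb2⟩ := barrier_local (((hu' τ).neg).sub (hc' τ)) h2 (by
        intro h0
        have huτ : u τ = -c τ := by simp only [Pi.sub_apply, Pi.neg_apply] at h0; linarith
        rw [huτ]
        nlinarith [mul_le_mul_of_nonneg_right hl1c hcpos.le,
          mul_le_mul_of_nonneg_left (show x2 τ ≤ c τ / 4 by linarith [hcd]) he0.le,
          mul_nonneg (mul_nonneg hl1.le hcpos.le) hx2τ, mul_pos he0 hcpos])
      obtain ⟨δ3, hδ3, hb3⟩ := barrier_local ((hx2' τ).sub (hd' τ)) h3 (by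
        intro h0
        have hxτ : x2 τ = d τ := by simp only [Pi.sub_apply] at h0; linarith
        rw [hxτ]
        have h2' : -u τ ≤ c τ := by linarith
        have h9 : (-u τ) * (lam2 * d τ) ≤ c τ * (lam2 * d τ) :=
          mul_le_mul_of_nonneg_right h2' (mul_nonneg hlam2.le hdpos.le)
        have h10 : lam2 * c τ * d τ ≤ e / 8 * d τ :=
          mul_le_mul_of_nonneg_right hl2c hdpos.le
        have h11 : 0 ≤ lam2 * (d τ * d τ) :=
          mul_nonneg hlam2.le (mul_nonneg hdpos.le hdpos.le)
        have h12 : 0 < e * d τ := mul_pos he0 hdpos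
        clear_value e A u y0 E c d
        nlinarith [h9, h10, h11, h12])
      refine ⟨min δ1 (min δ2 δ3), by positivity, fun s hs => ?_⟩
      have hs1 : s ∈ Set.Icc τ (τ + δ1) :=
        ⟨hs.1, hs.2.trans (by linarith [min_le_left δ1 (min δ2 δ3)])⟩
      have hs2 : s ∈ Set.Icc τ (τ + δ2) :=
        ⟨hs.1, hs.2.trans (by linarith [min_le_right δ1 (min δ2 δ3), min_le_left δ2 δ3])⟩
      have hs3 : s ∈ Set.Icc τ (τ + δ3) :=
        ⟨hs.1, hs.2.trans (by linarith [min_le_right δ1 (min δ2 δ3), min_le_right δ2 δ3])⟩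
      exact ⟨hb1 s hs1, hb2 s hs2, hb3 s hs3⟩
  -- pointwise bound on |u + x2|
  have habs : ∀ s ∈ Set.Icc (0:ℝ) t, |u s + x2 s| ≤ 5 * y0 * E s := by
    intro s hs
    obtain ⟨q1, q2, q3⟩ := hinv s hs.1
    have hx2s := hx2nn s
    have hcs : c s = 4 * y0 * E s := rfl
    have hds : d s = y0 * E s := rfl
    rw [abs_le]
    constructor <;> [nlinarith [hEpos s]; nlinarith [hEpos s]]
  -- integral bound
  set r : ℝ := ∫ s in (0:ℝ)..t, (u s + x2 s) with hr_def
  have hcux : Continuous (fun s => u s + x2 s) := hcu.add hcx2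
  have hintE : (∫ s in (0:ℝ)..t, 5 * y0 * E s) = (10 * y0 / e) * (1 - E t) := by
    have hF : ∀ s ∈ Set.uIcc (0:ℝ) t, HasDerivAt (fun w => -(10 * y0 / e) * E w) (5 * y0 * E s) s := by
      intro s _
      have := (hE' s).const_mul (-(10 * y0 / e))
      refine this.congr_deriv ?_
      field_simp
      ring
    rw [intervalIntegral.integral_eq_sub_of_hasDerivAt hF
      (((continuous_const.mul hcE)).intervalIntegrable _ _)]
    have hE0 : E 0 = 1 := by simp [hE_def]
    rw [hE0]; ring
  have hrabs : |r| ≤ 10 * y0 / e := by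
    have h1 : |r| ≤ ∫ s in (0:ℝ)..t, |u s + x2 s| := by
      rw [hr_def]
      exact intervalIntegral.abs_integral_le_integral_abs ht
    have h2 : (∫ s in (0:ℝ)..t, |u s + x2 s|) ≤ ∫ s in (0:ℝ)..t, 5 * y0 * E s := by
      apply intervalIntegral.integral_mono_on ht
      · exact (hcux.abs).intervalIntegrable _ _
      · exact ((continuous_const.mul hcE)).intervalIntegrable _ _
      · exact habs
    have h3 : (10 * y0 / e) * (1 - E t) ≤ 10 * y0 / e := by
      have := hEpos t
      have hq : 0 ≤ 10 * y0 / e := by positivity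
      nlinarith
    linarith [hintE ▸ h2]
  have hlog : lam2 * |r| ≤ Real.log 2 := by
    have h1 : lam2 * |r| ≤ lam2 * (10 * y0 / e) :=
      mul_le_mul_of_nonneg_left hrabs hlam2.le
    have h2 : lam2 * (10 * y0 / e) ≤ 10 / 32 := by
      rw [mul_div_assoc'] --  lam2 * (10*y0) / e ?
      rw [div_le_iff₀ he0]
      nlinarith
    have h3 : (10:ℝ)/32 ≤ Real.log 2 := by
      have := Real.log_two_gt_d9
      norm_num at this ⊢
      linarith
    linarith
  -- final assembly
  have hsplit : (∫ s in (0:ℝ)..t, (-e - lam2 * (u s + x2 s))) = -e * t - lam2 * r := by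
    rw [intervalIntegral.integral_sub (f := fun _ => -e) (g := fun s => lam2 * (u s + x2 s))
      (intervalIntegrable_const)
      ((continuous_const.mul hcux).intervalIntegrable _ _),
      intervalIntegral.integral_const, intervalIntegral.integral_const_mul]
    rw [hr_def]
    simp
    ring
  have hxt : x2 t = x2 0 * Real.exp (-t * e) * Real.exp (-(lam2 * r)) := by
    rw [hident t, hsplit, show -e * t - lam2 * r = (-t * e) + (-(lam2 * r)) by ring,
      Real.exp_add]
    ring
  have habs2 : |lam2 * r| ≤ Real.log 2 := by
    rw [abs_mul, abs_of_pos hlam2]; exact hlog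
  have hexp_hi : Real.exp (-(lam2 * r)) ≤ 2 := by
    have : -(lam2 * r) ≤ Real.log 2 := by
      have := neg_le_abs (lam2 * r); linarith [abs_le.mp habs2]
    calc Real.exp (-(lam2 * r)) ≤ Real.exp (Real.log 2) := Real.exp_le_exp.mpr this
    _ = 2 := Real.exp_log (by norm_num)
  have hexp_lo : (1/2 : ℝ) ≤ Real.exp (-(lam2 * r)) := by
    have h1 : -Real.log 2 ≤ -(lam2 * r) := by
      have := le_abs_self (lam2 * r); linarith [abs_le.mp habs2]
    calc (1/2 : ℝ) = Real.exp (-Real.log 2) := by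
          rw [Real.exp_neg, Real.exp_log (by norm_num)]; norm_num
    _ ≤ Real.exp (-(lam2 * r)) := Real.exp_le_exp.mpr h1
  have hpos : 0 ≤ x2 0 * Real.exp (-t * e) := by positivity
  constructor
  · rw [hxt]; nlinarith
  · rw [hxt]; nlinarith
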